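/- Let G be a finite bipartite graph with bipartition V = A ∪ B. For each k, the number of functions c : V → {Empty, Blue, Red} with exactly k non-Empty vertices such that no edge joins two vertices of the same non-Empty color equals the number of such functions with exactly k non-Empty vertices such that no edge joins two vertices of different non-Empty colors. -/

import Mathlib

inductive Color : Type
  | Empty | Blue | Red
  deriving DecidableEq

instance : Fintype Color where
  elems := {Color.Empty, Color.Blue, Color.Red}
  complete := by intro x; cases x <;> simp

def Color.swap : Color → Color
  | Color.Empty => Color.Empty
  | Color.Blue => Color.Red
  | Color.Red => Color.Blue

lemma Color.swap_swap (x : Color) : x.swap.swap = x := by cases x <;> rfl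

lemma Color.swap_ne_empty (x : Color) : x.swap ≠ Color.Empty ↔ x ≠ Color.Empty := by
  cases x <;> simp [Color.swap]

lemma Color.edge_key (bu bv : Bool) (x y : Color) (h : bu ≠ bv) :
    ((x ≠ Color.Empty ∧ x = y) ↔
      ((if bu then x.swap else x) ≠ Color.Empty ∧
       (if bv then y.swap else y) ≠ Color.Empty ∧
       (if bu then x.swap else x) ≠ (if bv then y.swap else y))) := by
  revert h; revert bu bv x y; decide

theorem col_eq_snort_on_bipartite (V : Type*) [Fintype V] [DecidableEq V]
    (G : SimpleGraph V) [DecidableRel G.Adj]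
    (side : V → Bool) (hbip : ∀ u v : V, G.Adj u v → side u ≠ side v)
    (k : ℕ) :
    Fintype.card {c : V → Color //
        (Finset.univ.filter fun v => c v ≠ Color.Empty).card = k ∧
        ∀ u v : V, G.Adj u v → ¬(c u ≠ Color.Empty ∧ c u = c v)} =
      Fintype.card {c : V → Color //
        (Finset.univ.filter fun v => c v ≠ Color.Empty).card = k ∧
        ∀ u v : V, G.Adj u v → ¬(c u ≠ Color.Empty ∧ c v ≠ Color.Empty ∧ c u ≠ c v)} := by
  let f : (V → Color) → (V → Color) := fun c v => if side v then (c v).swap else c v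
  have hff : ∀ c, f (f c) = c := by
    intro c; funext v; simp only [f]; split <;> simp [Color.swap_swap]
  have hcard : ∀ c : V → Color,
      (Finset.univ.filter fun v => f c v ≠ Color.Empty) =
      (Finset.univ.filter fun v => c v ≠ Color.Empty) := by
    intro c
    apply Finset.filter_congr
    intro v _
    simp only [f]; split <;> simp [Color.swap_ne_empty]
  apply Fintype.card_congr
  refine Equiv.subtypeEquiv ⟨f, f, hff, hff⟩ ?_
  intro c
  simp only [Equiv.coe_fn_mk]
  apply and_congr
  · rw [hcard]
  · apply forall_congr'; intro u
    apply forall_congr'; intro v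
    apply imp_congr_right; intro huv
    apply not_congr
    exact Color.edge_key (side u) (side v) (c u) (c v) (hbip u v huv)
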